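/- Let 𝓘 : Fin m → Finset ℕ be an abstract network and let (T,γ) be a contractive rooted carving decomposition of its graph G(𝓘) of width w and height h. Define ι on the nodes of T by ι(u) = 𝓘(γ(u)) for every leaf u and ι(u) = ι(u.l) Δ ι(u.r) for every internal node u with children u.l and u.r. Then (T,ι) is a contraction tree for 𝓘 of height h (in particular, ι(u.l) ∩ ι(u.r) ≠ ∅ for every internal node u), for every node u of T one has |ι(u)| = |E(V[u], V∖V[u])| in G(𝓘), and the rank of (T,ι) equals the width of (T,γ); in particular the rank of (T,ι) is at most w. -/

import Mathlib

/-- A multigraph: a map assigning to each edge an unordered pair of two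
distinct vertices (loops forbidden, parallel edges allowed). -/
structure Multigraph (V E : Type) where
  ends : E → Sym2 V
  no_loops : ∀ e : E, ¬ (ends e).IsDiag

namespace Multigraph

variable {V E : Type}

/-- Two vertices are adjacent if some edge has them as its endpoints. -/
def Adj (G : Multigraph V E) (a b : V) : Prop :=
  a ≠ b ∧ ∃ e : E, a ∈ G.ends e ∧ b ∈ G.ends e

/-- A multigraph is connected if every two vertices are joined by a finite
sequence of adjacencies. -/
def Connected (G : Multigraph V E) : Prop :=
  Nonempty V ∧ ∀ a b : V, Relation.ReflTransGen G.Adj a b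

/-- The number of edges with one endpoint in `S` and the other outside `S`. -/
noncomputable def cutCount (G : Multigraph V E) (S : Set V) : ℕ :=
  Nat.card {e : E // (∃ a ∈ G.ends e, a ∈ S) ∧ (∃ a ∈ G.ends e, a ∉ S)}

/-- The degree of a vertex: the number of edge-endpoint incidences at `v`. -/
noncomputable def degree (G : Multigraph V E) (v : V) : ℕ :=
  Nat.card {e : E // v ∈ G.ends e}

end Multigraph

/-- Rooted binary trees in which every internal node has exactly two children,
with leaves labeled by elements of `α`. -/
inductive BTree (α : Type) : Type
  | leaf (a : α) : BTree α
  | node (l r : BTree α) : BTree α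

namespace BTree

variable {α : Type}

/-- The list of leaf labels of a binary tree. -/
def leaves : BTree α → List α
  | leaf a => [a]
  | node l r => l.leaves ++ r.leaves

/-- The set of leaf labels of a binary tree (for a node `u` of a carving
decomposition, this is `V[u]`). -/
def leafSet (T : BTree α) : Set α := {a | a ∈ T.leaves}

/-- The height of a binary tree: maximum number of edges on a root-to-leaf path. -/
def height : BTree α → ℕ
  | leaf _ => 0
  | node l r => max l.height r.height + 1

/-- The list of all subtrees (i.e. nodes) of a binary tree. -/
def subtrees : BTree α → List (BTree α)
  | leaf a => [leaf a]
  | node l r => node l r :: (l.subtrees ++ r.subtrees)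

end BTree

/-- A rooted carving decomposition of a multigraph `G` on vertex type `V`:
a rooted binary tree whose leaves are labeled bijectively with the vertices. -/
def IsCarvingDecomp {V E : Type} (_G : Multigraph V E) (T : BTree V) : Prop :=
  T.leaves.Nodup ∧ ∀ v : V, v ∈ T.leaves

/-- The carving decomposition `T` of `G` has width at most `w`:
for every node `u`, `|E(V[u], V∖V[u])| ≤ w`. -/
def CarvWidthLE {V E : Type} (G : Multigraph V E) (T : BTree V) (w : ℕ) : Prop :=
  ∀ u ∈ T.subtrees, G.cutCount u.leafSet ≤ w

/-- A carving decomposition is contractive if for every internal node `u`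
there is an edge with one endpoint in `V[u.l]` and the other in `V[u.r]`. -/
def Contractive {V E : Type} (G : Multigraph V E) (T : BTree V) : Prop :=
  ∀ l r : BTree V, BTree.node l r ∈ T.subtrees →
    ∃ e : E, (∃ a ∈ G.ends e, a ∈ l.leafSet) ∧ (∃ a ∈ G.ends e, a ∈ r.leafSet)

/-- An abstract network: every index occurring in the family belongs to exactly
two members of the family. -/
def IsAbstractNetwork {m : ℕ} (I : Fin m → Finset ℕ) : Prop :=
  ∀ i : ℕ, (∃ j : Fin m, i ∈ I j) →
    (Finset.univ.filter fun j : Fin m => i ∈ I j).card = 2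

/-- `G` (with edge-to-index labeling `idx`) is the graph of the abstract network `I`. -/
def IsNetworkGraph {m : ℕ} {E : Type} (I : Fin m → Finset ℕ)
    (G : Multigraph (Fin m) E) (idx : E → ℕ) : Prop :=
  Function.Injective idx ∧
  (∀ i : ℕ, (∃ j : Fin m, i ∈ I j) → ∃ e : E, idx e = i) ∧
  (∀ e : E, ∀ j : Fin m, j ∈ G.ends e ↔ idx e ∈ I j)

/-- The index set `ι(u)` attached to the node `u` of the tree `T`:
`ι(u) = I(γ(u))` at a leaf `u` and `ι(u) = ι(u.l) Δ ι(u.r)` at an internal node. -/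
def iota {m : ℕ} (I : Fin m → Finset ℕ) : BTree (Fin m) → Finset ℕ
  | .leaf j => I j
  | .node l r => symmDiff (iota I l) (iota I r)

/-- `(T, ι)` is a contraction tree for the abstract network `I`. -/
def IsContractionTree {m : ℕ} (I : Fin m → Finset ℕ) (T : BTree (Fin m)) : Prop :=
  T.leaves.Nodup ∧ (∀ j : Fin m, j ∈ T.leaves) ∧
  ∀ l r : BTree (Fin m), BTree.node l r ∈ T.subtrees →
    ((iota I l) ∩ (iota I r)).Nonempty

/-- The rank of the contraction tree `(T, ι)`: the maximum of `|ι(u)|` over nodes `u`. -/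
def rankOf {m : ℕ} (I : Fin m → Finset ℕ) (T : BTree (Fin m)) : ℕ :=
  (T.subtrees.map fun u => (iota I u).card).foldr max 0

/-- The width of the carving decomposition `(T, γ)` of `G`:
the maximum of `|E(V[u], V∖V[u])|` over nodes `u`. -/
noncomputable def carvWidth {V E : Type} (G : Multigraph V E) (T : BTree V) : ℕ :=
  (T.subtrees.map fun u => G.cutCount u.leafSet).foldr max 0

lemma mem_iota_iff {m : ℕ} (I : Fin m → Finset ℕ) (u : BTree (Fin m)) (i : ℕ) :
    i ∈ iota I u ↔ Odd (u.leaves.countP (fun j => decide (i ∈ I j))) := by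
  induction u with
  | leaf j => by_cases h : i ∈ I j <;> simp [iota, BTree.leaves, h, Nat.odd_iff]
  | node l r ihl ihr =>
    simp only [iota, BTree.leaves, List.countP_append, Finset.mem_symmDiff, ihl, ihr,
      Nat.odd_add, ← Nat.not_odd_iff_even]
    tauto

lemma mem_subtrees_self {α : Type} (T : BTree α) : T ∈ T.subtrees := by
  cases T <;> simp [BTree.subtrees]

lemma subtrees_trans {α : Type} {T u v : BTree α} (hu : u ∈ T.subtrees)
    (hv : v ∈ u.subtrees) : v ∈ T.subtrees := by
  induction T with
  | leaf a => simp [BTree.subtrees] at hu; subst hu; exact hv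
  | node l r ihl ihr =>
    simp [BTree.subtrees] at hu ⊢
    rcases hu with h | h | h
    · subst h; simpa [BTree.subtrees] using hv
    · exact Or.inr (Or.inl (ihl h))
    · exact Or.inr (Or.inr (ihr h))

lemma leaves_sublist {α : Type} {T u : BTree α} (hu : u ∈ T.subtrees) :
    u.leaves.Sublist T.leaves := by
  induction T with
  | leaf a => simp [BTree.subtrees] at hu; subst hu; exact List.Sublist.refl _
  | node l r ihl ihr =>
    simp [BTree.subtrees] at hu
    rcases hu with h | h | h
    · subst h; exact List.Sublist.refl _
    · exact (ihl h).trans (List.sublist_append_left _ _)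
    · exact (ihr h).trans (List.sublist_append_right _ _)

lemma countP_eq_card {α : Type} [DecidableEq α] {l : List α} (hl : l.Nodup)
    (p : α → Prop) [DecidablePred p] :
    l.countP (fun x => decide (p x)) = (l.toFinset.filter p).card := by
  rw [List.countP_eq_length_filter, ← List.toFinset_card_of_nodup (hl.filter _)]
  congr 1
  ext x
  simp


/-- Let `I` be an abstract network and `(T,γ)` a contractive rooted
carving decomposition of its graph `G(I)` of width `w` and height `h`. With
`ι(u) = I(γ(u))` at leaves and `ι(u) = ι(u.l) Δ ι(u.r)` at internal nodes, `(T,ι)`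
is a contraction tree for `I` of height `h`, `|ι(u)| = |E(V[u], V∖V[u])|` for every
node `u`, and the rank of `(T,ι)` equals the width of `(T,γ)`; in particular the
rank is at most `w`. -/
theorem statement_7 {m : ℕ} {E : Type} [Fintype E]
    (I : Fin m → Finset ℕ) (hnet : IsAbstractNetwork I)
    (G : Multigraph (Fin m) E) (idx : E → ℕ) (hG : IsNetworkGraph I G idx)
    (T : BTree (Fin m)) (hT : IsCarvingDecomp G T) (hcontr : Contractive G T)
    (w h : ℕ) (hw : carvWidth G T = w) (hh : T.height = h) :
    IsContractionTree I T ∧ T.height = h ∧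
    (∀ u ∈ T.subtrees, (iota I u).card = G.cutCount u.leafSet) ∧
    rankOf I T = carvWidth G T ∧ rankOf I T ≤ w := by
  classical
  obtain ⟨hinj, hsurj, hends⟩ := hG
  obtain ⟨hnodupT, hallT⟩ := hT
  have hnodup : ∀ u ∈ T.subtrees, u.leaves.Nodup :=
    fun u hu => (leaves_sublist hu).nodup hnodupT
  -- crossing characterization
  have hcross : ∀ u ∈ T.subtrees, ∀ e : E,
      ((∃ a ∈ G.ends e, a ∈ u.leafSet) ∧ (∃ a ∈ G.ends e, a ∉ u.leafSet)) ↔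
        idx e ∈ iota I u := by
    intro u hu e
    obtain ⟨a, b, habe⟩ : ∃ a b : Fin m, G.ends e = s(a, b) := by
      induction G.ends e using Sym2.ind with
      | _ x y => exact ⟨x, y, rfl⟩
    have hab : a ≠ b := by
      intro hh'
      exact G.no_loops e (by rw [habe, hh']; exact Sym2.mk_isDiag_iff.mpr rfl)
    have hIiff : ∀ j : Fin m, idx e ∈ I j ↔ (j = a ∨ j = b) := by
      have hcard : (Finset.univ.filter fun j : Fin m => idx e ∈ I j).card = 2 :=
        hnet (idx e) ⟨a, (hends e a).mp (by rw [habe]; exact Sym2.mem_mk_left a b)⟩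
      have hsub : ({a, b} : Finset (Fin m)) ⊆
          Finset.univ.filter fun j : Fin m => idx e ∈ I j := by
        intro j hj
        simp only [Finset.mem_insert, Finset.mem_singleton] at hj
        simp only [Finset.mem_filter, Finset.mem_univ, true_and]
        rw [← hends e j, habe]
        rcases hj with rfl | rfl
        · exact Sym2.mem_mk_left _ _
        · exact Sym2.mem_mk_right _ _
      have heq : (Finset.univ.filter fun j : Fin m => idx e ∈ I j) = {a, b} :=
        (Finset.eq_of_subset_of_card_le hsub
          (by rw [hcard, Finset.card_insert_of_notMem (by simpa using hab),
            Finset.card_singleton])).symm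
      intro j
      constructor
      · intro hj
        have : j ∈ ({a, b} : Finset (Fin m)) := heq ▸ (by simp [hj])
        simpa using this
      · intro hj
        have := hsub (by simpa using hj)
        simpa using this
    have hmemS : ∀ x : Fin m, x ∈ u.leafSet ↔ x ∈ u.leaves.toFinset := by
      intro x; simp [BTree.leafSet]
    rw [mem_iota_iff, countP_eq_card (hnodup u hu)]
    have hfilter : (u.leaves.toFinset.filter fun j => idx e ∈ I j) =
        u.leaves.toFinset.filter fun j => j = a ∨ j = b := by
      apply Finset.filter_congr; intro j _; simp [hIiff j]
    rw [hfilter]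
    by_cases ha : a ∈ u.leaves.toFinset <;> by_cases hb : b ∈ u.leaves.toFinset
    · have : (u.leaves.toFinset.filter fun j => j = a ∨ j = b) = {a, b} := by
        ext j; simp only [Finset.mem_filter, Finset.mem_insert, Finset.mem_singleton]
        constructor
        · rintro ⟨_, h⟩; exact h
        · rintro (rfl | rfl) <;> simp [ha, hb]
      rw [this, Finset.card_insert_of_notMem (by simpa using hab),
        Finset.card_singleton]
      constructor
      · rintro ⟨-, x, hx, hxS⟩
        exfalso
        rw [habe, Sym2.mem_iff] at hx
        rcases hx with rfl | rfl
        · exact hxS ((hmemS x).mpr ha)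
        · exact hxS ((hmemS x).mpr hb)
      · intro hodd; exact absurd hodd (by decide)
    · have : (u.leaves.toFinset.filter fun j => j = a ∨ j = b) = {a} := by
        ext j; simp only [Finset.mem_filter, Finset.mem_singleton]
        constructor
        · rintro ⟨hj, rfl | rfl⟩
          · rfl
          · exact absurd hj hb
        · rintro rfl; exact ⟨ha, Or.inl rfl⟩
      rw [this, Finset.card_singleton]
      constructor
      · intro _; decide
      · intro _
        exact ⟨⟨a, by rw [habe]; exact Sym2.mem_mk_left _ _, (hmemS a).mpr ha⟩,
          ⟨b, by rw [habe]; exact Sym2.mem_mk_right _ _, fun hc => hb ((hmemS b).mp hc)⟩⟩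
    · have : (u.leaves.toFinset.filter fun j => j = a ∨ j = b) = {b} := by
        ext j; simp only [Finset.mem_filter, Finset.mem_singleton]
        constructor
        · rintro ⟨hj, rfl | rfl⟩
          · exact absurd hj ha
          · rfl
        · rintro rfl; exact ⟨hb, Or.inr rfl⟩
      rw [this, Finset.card_singleton]
      constructor
      · intro _; decide
      · intro _
        exact ⟨⟨b, by rw [habe]; exact Sym2.mem_mk_right _ _, (hmemS b).mpr hb⟩,
          ⟨a, by rw [habe]; exact Sym2.mem_mk_left _ _, fun hc => ha ((hmemS a).mp hc)⟩⟩
    · have : (u.leaves.toFinset.filter fun j => j = a ∨ j = b) = ∅ := by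
        ext j; simp only [Finset.mem_filter, Finset.notMem_empty, iff_false]
        rintro ⟨hj, rfl | rfl⟩
        · exact ha hj
        · exact hb hj
      rw [this, Finset.card_empty]
      constructor
      · rintro ⟨⟨x, hx, hxS⟩, -⟩
        exfalso
        rw [habe, Sym2.mem_iff] at hx
        rcases hx with rfl | rfl
        · exact ha ((hmemS x).mp hxS)
        · exact hb ((hmemS x).mp hxS)
      · intro hodd; exact absurd hodd (by decide)
  -- cardinality equality
  have hcard : ∀ u ∈ T.subtrees, (iota I u).card = G.cutCount u.leafSet := by
    intro u hu
    have : G.cutCount u.leafSet = (Finset.univ.filter fun e : E =>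
        (∃ a ∈ G.ends e, a ∈ u.leafSet) ∧ (∃ a ∈ G.ends e, a ∉ u.leafSet)).card := by
      rw [Multigraph.cutCount, Nat.card_eq_fintype_card, Fintype.card_subtype]
    rw [this]
    have himg : (Finset.univ.filter fun e : E =>
        (∃ a ∈ G.ends e, a ∈ u.leafSet) ∧ (∃ a ∈ G.ends e, a ∉ u.leafSet)).image idx
        = iota I u := by
      ext i
      simp only [Finset.mem_image, Finset.mem_filter, Finset.mem_univ, true_and]
      constructor
      · rintro ⟨e, he, rfl⟩
        exact (hcross u hu e).mp he
      · intro hi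
        have hodd := (mem_iota_iff I u i).mp hi
        have hpos : 0 < u.leaves.countP (fun j => decide (i ∈ I j)) := hodd.pos
        rw [List.countP_pos_iff] at hpos
        obtain ⟨j, _, hj⟩ := hpos
        obtain ⟨e, rfl⟩ := hsurj i ⟨j, by simpa using hj⟩
        exact ⟨e, (hcross u hu e).mpr hi, rfl⟩
    rw [← himg, Finset.card_image_of_injective _ hinj]
  have hrw : rankOf I T = carvWidth G T := by
    unfold rankOf carvWidth
    congr 1
    exact List.map_congr_left hcard
  refine ⟨⟨hnodupT, hallT, ?_⟩, hh, hcard, hrw, hw ▸ hrw.le⟩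
  intro l r hlr
  have hl : l ∈ T.subtrees := subtrees_trans hlr (by simp [BTree.subtrees, mem_subtrees_self])
  have hr : r ∈ T.subtrees := subtrees_trans hlr (by simp [BTree.subtrees, mem_subtrees_self])
  obtain ⟨e, ⟨a, hae, hal⟩, ⟨b, hbe, hbr⟩⟩ := hcontr l r hlr
  have hdisj : ∀ x ∈ l.leaves, x ∉ r.leaves := by
    have := hnodup _ hlr
    simp only [BTree.leaves, List.nodup_append] at this
    exact fun x hx hx' => this.2.2 x hx x hx' rfl
  refine ⟨idx e, Finset.mem_inter.mpr ⟨?_, ?_⟩⟩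
  · exact (hcross l hl e).mp ⟨⟨a, hae, hal⟩, ⟨b, hbe, fun hc => hdisj b hc hbr⟩⟩
  · exact (hcross r hr e).mp ⟨⟨b, hbe, hbr⟩, ⟨a, hae, fun hc => hdisj a hal hc⟩⟩
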